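/- Let k > 0 and let a_i, b_i, c_i (i = 1,2,3) be real numbers. Define X(u) = a₁ + b₁e^{ku} + c₁e^{−ku}, Y(v) = a₂ + b₂e^{kv} + c₂e^{−kv}, Z(w) = a₃ + b₃e^{kw} + c₃e^{−kw}. Then (Y(v) − Z(w))X'(u) + (X(u) − Z(w))Y'(v) − (X(u) + Y(v))Z'(w) = 0 holds for all (u,v,w) with u+v+w = 0 if and only if the following six equations hold: (a₂−a₃)c₁ + 2b₂b₃ = 0; (a₁−a₃)c₂ + 2b₁b₃ = 0; (a₂−a₃)b₁ + 2c₂c₃ = 0; (a₁−a₃)b₂ + 2c₁c₃ = 0; (a₁+a₂)b₃ + 2c₁c₂ = 0; (a₁+a₂)c₃ + 2b₁b₂ = 0. -/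

import Mathlib

/-- The exponential ansatz `a + b·e^{ku} + c·e^{−ku}` (case `K = k² > 0`). -/
noncomputable def expAnsatz (a b c k : ℝ) : ℝ → ℝ :=
  fun u => a + b * Real.exp (k * u) + c * Real.exp (-(k * u))

lemma deriv_expAnsatz (a b c k u : ℝ) :
    deriv (expAnsatz a b c k) u
      = b * k * Real.exp (k * u) - c * k * Real.exp (-(k * u)) := by
  have h1 : HasDerivAt (fun u : ℝ => k * u) k u := by
    simpa using (hasDerivAt_id u).const_mul k
  have h2 : HasDerivAt (fun u : ℝ => Real.exp (k * u)) (Real.exp (k * u) * k) u :=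
    (Real.hasDerivAt_exp _).comp u h1
  have h3 : HasDerivAt (fun u : ℝ => Real.exp (-(k * u))) (Real.exp (-(k * u)) * (-k)) u :=
    (Real.hasDerivAt_exp _).comp u (by exact h1.neg)
  have h : HasDerivAt (expAnsatz a b c k)
      (b * (Real.exp (k * u) * k) + c * (Real.exp (-(k * u)) * (-k))) u := by
    unfold expAnsatz
    exact ((hasDerivAt_const u a).add (h2.const_mul b)).add (h3.const_mul c) |>.congr_deriv (by ring) |>.congr_deriv rfl
  rw [h.deriv]; ring

lemma key_pt (k a₁ b₁ c₁ a₂ b₂ c₂ a₃ b₃ c₃ : ℝ) (hk : 0 < k)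
    (h : ∀ u v w : ℝ, u + v + w = 0 →
      (expAnsatz a₂ b₂ c₂ k v - expAnsatz a₃ b₃ c₃ k w) * deriv (expAnsatz a₁ b₁ c₁ k) u
        + (expAnsatz a₁ b₁ c₁ k u - expAnsatz a₃ b₃ c₃ k w) * deriv (expAnsatz a₂ b₂ c₂ k) v
        - (expAnsatz a₁ b₁ c₁ k u + expAnsatz a₂ b₂ c₂ k v) * deriv (expAnsatz a₃ b₃ c₃ k) w
        = 0)
    (s t : ℝ) (hs : 0 < s) (ht : 0 < t) :
    ((a₁ + a₂) * c₃ + 2 * b₁ * b₂) * s^2 * t^2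
      + ((a₂ - a₃) * b₁ + 2 * c₂ * c₃) * s^2 * t
      + ((a₁ - a₃) * b₂ + 2 * c₁ * c₃) * s * t^2
      - ((a₁ - a₃) * c₂ + 2 * b₁ * b₃) * s
      - ((a₂ - a₃) * c₁ + 2 * b₂ * b₃) * t
      - ((a₁ + a₂) * b₃ + 2 * c₁ * c₂) = 0 := by
  have hk' : k ≠ 0 := hk.ne'
  have hE := h (Real.log s / k) (Real.log t / k) (-(Real.log s / k) - Real.log t / k) (by ring)
  rw [deriv_expAnsatz, deriv_expAnsatz, deriv_expAnsatz] at hE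
  have h1 : k * (Real.log s / k) = Real.log s := by field_simp
  have h2 : k * (Real.log t / k) = Real.log t := by field_simp
  have h3 : k * (-(Real.log s / k) - Real.log t / k) = -(Real.log s + Real.log t) := by
    field_simp; ring
  simp only [expAnsatz, h1, h2, h3, neg_neg, Real.exp_neg, Real.exp_add,
    Real.exp_log hs, Real.exp_log ht] at hE
  field_simp at hE
  have hne : (k * s^5 * t^5 : ℝ) ≠ 0 := by positivity
  apply mul_left_cancel₀ hne
  rw [mul_zero]
  linear_combination (s^4 * t^4) * hE

/-- For the exponential ansatz with `k > 0`, the separable zero mean curvature equation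
`(Y−Z)X' + (X−Z)Y' − (X+Y)Z' = 0` on the plane `u+v+w=0` holds iff the six constraint
equations (11) relating the constants `aᵢ, bᵢ, cᵢ` hold. -/
theorem stmt_5 (k a₁ b₁ c₁ a₂ b₂ c₂ a₃ b₃ c₃ : ℝ) (hk : 0 < k) :
    (∀ u v w : ℝ, u + v + w = 0 →
      (expAnsatz a₂ b₂ c₂ k v - expAnsatz a₃ b₃ c₃ k w) * deriv (expAnsatz a₁ b₁ c₁ k) u
        + (expAnsatz a₁ b₁ c₁ k u - expAnsatz a₃ b₃ c₃ k w) * deriv (expAnsatz a₂ b₂ c₂ k) v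
        - (expAnsatz a₁ b₁ c₁ k u + expAnsatz a₂ b₂ c₂ k v) * deriv (expAnsatz a₃ b₃ c₃ k) w
        = 0)
    ↔ ((a₂ - a₃) * c₁ + 2 * b₂ * b₃ = 0 ∧
       (a₁ - a₃) * c₂ + 2 * b₁ * b₃ = 0 ∧
       (a₂ - a₃) * b₁ + 2 * c₂ * c₃ = 0 ∧
       (a₁ - a₃) * b₂ + 2 * c₁ * c₃ = 0 ∧
       (a₁ + a₂) * b₃ + 2 * c₁ * c₂ = 0 ∧
       (a₁ + a₂) * c₃ + 2 * b₁ * b₂ = 0) := by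
  constructor
  · intro h
    have q11 := key_pt k a₁ b₁ c₁ a₂ b₂ c₂ a₃ b₃ c₃ hk h 1 1 one_pos one_pos
    have q21 := key_pt k a₁ b₁ c₁ a₂ b₂ c₂ a₃ b₃ c₃ hk h 2 1 two_pos one_pos
    have q12 := key_pt k a₁ b₁ c₁ a₂ b₂ c₂ a₃ b₃ c₃ hk h 1 2 one_pos two_pos
    have q22 := key_pt k a₁ b₁ c₁ a₂ b₂ c₂ a₃ b₃ c₃ hk h 2 2 two_pos two_pos
    have q31 := key_pt k a₁ b₁ c₁ a₂ b₂ c₂ a₃ b₃ c₃ hk h 3 1 three_pos one_pos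
    have q13 := key_pt k a₁ b₁ c₁ a₂ b₂ c₂ a₃ b₃ c₃ hk h 1 3 one_pos three_pos
    refine ⟨?_, ?_, ?_, ?_, ?_, ?_⟩
    · linear_combination (11/3) * q11 - (5/3) * q21 - (14/3) * q12 - (1/3) * q22 + q31 + 2 * q13
    · linear_combination (11/3) * q11 - (14/3) * q21 - (5/3) * q12 - (1/3) * q22 + 2 * q31 + q13
    · linear_combination (7/6) * q11 - (5/3) * q21 - (2/3) * q12 - (1/3) * q22 + q31 + (1/2) * q13
    · linear_combination (7/6) * q11 - (2/3) * q21 - (5/3) * q12 - (1/3) * q22 + (1/2) * q31 + q13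
    · linear_combination (-20/3) * q11 + (14/3) * q21 + (14/3) * q12 + (1/3) * q22 - 2 * q31 - 2 * q13
    · linear_combination (-2/3) * q11 + (2/3) * q21 + (2/3) * q12 + (1/3) * q22 - (1/2) * q31 - (1/2) * q13
  · rintro ⟨h₁, h₂, h₃, h₄, h₅, h₆⟩ u v w huvw
    have hw : w = -u - v := by linarith
    subst hw
    rw [deriv_expAnsatz, deriv_expAnsatz, deriv_expAnsatz]
    simp only [expAnsatz]
    rw [show k * (-u - v) = -(k * u) + -(k * v) from by ring]
    rw [show -(-(k * u) + -(k * v)) = k * u + k * v from by ring]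
    simp only [Real.exp_add]
    have hs1 : Real.exp (k * u) * Real.exp (-(k * u)) = 1 := by
      rw [← Real.exp_add]; simp
    have ht1 : Real.exp (k * v) * Real.exp (-(k * v)) = 1 := by
      rw [← Real.exp_add]; simp
    set s := Real.exp (k * u)
    set t := Real.exp (k * v)
    set s' := Real.exp (-(k * u))
    set t' := Real.exp (-(k * v))
    linear_combination (k*s) * h₃ + (k*t) * h₄ + (k*s*t) * h₆
      - (k*s') * h₁ - (k*t') * h₂ - (k*s'*t') * h₅
      + (2*k*c₁*c₃*t - 2*k*b₁*b₃*t') * hs1 + (2*k*c₂*c₃*s - 2*k*b₂*b₃*s') * ht1
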